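/- For every σ > 0 there exists a real constant K₀ = K₀(σ) > 0 with the following property: for all real numbers α′, for every real β′ ≥ 2σ, every real K′ ≥ K₀ and every r′ ∈ ℝ, one has ℑ̃_{K′}(r′ + 2K′) − 2·ℑ̃_{K′}(r′ + K′) + ℑ̃_{K′}(r′) > 0. -/

import Mathlib

open MeasureTheory

lemma Jval (α' β' : ℝ) (hβ : β' ≠ 0) (a b : ℝ) :
    (∫ τ in a..b, (1 + Real.cos (α' * τ)) * Real.exp (β' * τ))
      = (Real.exp (β' * b) - Real.exp (β' * a)) / β'
        + ((Complex.exp ((β' + α' * Complex.I) * b) - Complex.exp ((β' + α' * Complex.I) * a))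
            / (β' + α' * Complex.I)).re := by
  set z : ℂ := β' + α' * Complex.I with hz
  have hzne : z ≠ 0 := by
    intro h
    have : (z.re) = 0 := by rw [h]; simp
    simp [hz] at this
    exact hβ this
  have key : ∀ τ : ℝ, (1 + Real.cos (α' * τ)) * Real.exp (β' * τ)
      = (Complex.exp ((β' : ℂ) * τ) + Complex.exp (z * τ)).re := by
    intro τ
    have h1 : ((β' : ℂ) * τ) = ((β' * τ : ℝ) : ℂ) := by push_cast; ring
    have h2 : z * τ = (β' * τ : ℝ) + (α' * τ : ℝ) * Complex.I := by rw [hz]; push_cast; ring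
    have e1 : (Complex.exp ((β' : ℂ) * τ)).re = Real.exp (β' * τ) := by
      rw [h1, Complex.exp_ofReal_re]
    have e2 : (Complex.exp (z * τ)).re = Real.exp (β' * τ) * Real.cos (α' * τ) := by
      rw [h2, Complex.exp_add, ← Complex.ofReal_exp, Complex.re_ofReal_mul,
        Complex.exp_ofReal_mul_I_re]
    rw [Complex.add_re, e1, e2]
    ring
  have hint : IntervalIntegrable (fun τ : ℝ => Complex.exp ((β' : ℂ) * τ) + Complex.exp (z * τ))
      volume a b := (Continuous.intervalIntegrable (by fun_prop) a b)
  calc (∫ τ in a..b, (1 + Real.cos (α' * τ)) * Real.exp (β' * τ))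
      = ∫ τ in a..b, (Complex.exp ((β' : ℂ) * τ) + Complex.exp (z * τ)).re := by
        simp_rw [key]
    _ = (∫ τ in a..b, (Complex.exp ((β' : ℂ) * τ) + Complex.exp (z * τ))).re := by
        exact Complex.reCLM.intervalIntegral_comp_comm hint
    _ = ((Complex.exp ((β' : ℂ) * b) - Complex.exp ((β' : ℂ) * a)) / β'
          + (Complex.exp (z * b) - Complex.exp (z * a)) / z).re := by
        rw [intervalIntegral.integral_add ((Continuous.intervalIntegrable (by fun_prop) a b))
          ((Continuous.intervalIntegrable (by fun_prop) a b)),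
          integral_exp_mul_complex (by exact_mod_cast hβ), integral_exp_mul_complex hzne]
    _ = _ := by
        rw [Complex.add_re]
        congr 1
        have h1 : ((β' : ℂ) * b) = ((β' * b : ℝ) : ℂ) := by push_cast; ring
        have h2 : ((β' : ℂ) * a) = ((β' * a : ℝ) : ℂ) := by push_cast; ring
        rw [Complex.div_ofReal_re, Complex.sub_re, h1, h2, Complex.exp_ofReal_re,
          Complex.exp_ofReal_re]

lemma aux_one_sub_cos_le (θ : ℝ) : 1 - Real.cos θ ≤ θ ^ 2 / 2 := by
  have h2 := Real.cos_two_mul (θ / 2)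
  rw [show 2 * (θ / 2) = θ from by ring] at h2
  nlinarith [Real.sin_sq_le_sq (x := θ / 2), Real.sin_sq_add_cos_sq (θ / 2)]

lemma aux_exp_lb {x : ℝ} (hx : 86 ≤ x) : 28 * x ^ 2 < Real.exp x := by
  have h4 : (Real.exp (x / 4)) ^ 4 = Real.exp x := by
    rw [show x = x / 4 + x / 4 + x / 4 + x / 4 from by ring, Real.exp_add, Real.exp_add,
      Real.exp_add]
    ring
  have h6 : (x / 4) ^ 4 ≤ (Real.exp (x / 4)) ^ 4 :=
    pow_le_pow_left₀ (by linarith) (by linarith [Real.add_one_le_exp (x / 4)]) 4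
  have hx2 : (7396 : ℝ) ≤ x ^ 2 := by nlinarith
  rw [← h4]
  nlinarith [h6, hx2, mul_le_mul_of_nonneg_left hx2 (by positivity : (0 : ℝ) ≤ x ^ 2)]

lemma aux_cube_lt {E β' α' K' q : ℝ} (hβ : 0 < β') (hα : α' ≠ 0)
    (hEbig : 28 * (β' * K') ^ 2 < E) (hE6 : 6 ≤ E) (hq0 : 0 ≤ q)
    (hqc : q ≤ E * (α' * K') ^ 2) (hq4 : q ≤ 4 * E) :
    ((E - 1) ^ 2 + q) ^ 3 * β' ^ 2 < ((E - 1) ^ 2) ^ 3 * (β' ^ 2 + α' ^ 2) := by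
  have hEpos : (0 : ℝ) < E := by linarith
  have hDpos : 0 < (E - 1) ^ 2 := by nlinarith
  have hqD : q ≤ (E - 1) ^ 2 := by nlinarith
  have h7 : 7 * E * (β' * K') ^ 2 < (E - 1) ^ 2 := by
    nlinarith [mul_lt_mul_of_pos_left hEbig hEpos, sq_nonneg (β' * K')]
  have hαpos : 0 < α' ^ 2 := by positivity
  have hq2 : 7 * q * β' ^ 2 < (E - 1) ^ 2 * α' ^ 2 := by
    have h8 : q * β' ^ 2 ≤ E * (β' * K') ^ 2 * α' ^ 2 := by
      have := mul_le_mul_of_nonneg_right hqc (sq_nonneg β')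
      nlinarith [this]
    nlinarith [mul_lt_mul_of_pos_right h7 hαpos]
  have hcube : ((E - 1) ^ 2 + q) ^ 3
      ≤ ((E - 1) ^ 2) ^ 3 + 7 * ((E - 1) ^ 2) ^ 2 * q := by
    nlinarith [mul_nonneg (mul_nonneg hq0 (sub_nonneg.2 hqD)) hDpos.le,
      mul_nonneg (mul_nonneg hq0 (sub_nonneg.2 hqD)) hq0]
  calc ((E - 1) ^ 2 + q) ^ 3 * β' ^ 2
      ≤ (((E - 1) ^ 2) ^ 3 + 7 * ((E - 1) ^ 2) ^ 2 * q) * β' ^ 2 :=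
        mul_le_mul_of_nonneg_right hcube (sq_nonneg β')
    _ < ((E - 1) ^ 2) ^ 3 * (β' ^ 2 + α' ^ 2) := by
        have h9 := mul_lt_mul_of_pos_left hq2 (mul_pos hDpos hDpos)
        nlinarith [h9]

/-- Logarithmic-variable reformulation of the three-circle inequality for complex
indicial roots: for every `σ > 0` there exists `K₀ > 0` such that for all `α'`,
all `β' ≥ 2σ`, all `K' ≥ K₀` and every `r' ∈ ℝ`, setting
`J(r') = ∫_{r'}^{r'+K'} (1 + cos(α'τ)) e^{β'τ} dτ`, one has
`J(r' + 2K') - 2 J(r' + K') + J(r') > 0`. -/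
theorem three_circle_log_variable :
    ∀ σ : ℝ, 0 < σ → ∃ K₀ : ℝ, 0 < K₀ ∧
      ∀ α' β' K' : ℝ, 2 * σ ≤ β' → K₀ ≤ K' →
        let J : ℝ → ℝ := fun r' =>
          ∫ τ in r'..(r' + K'), (1 + Real.cos (α' * τ)) * Real.exp (β' * τ)
        ∀ r' : ℝ, J (r' + 2 * K') - 2 * J (r' + K') + J r' > 0 := by
  intro σ hσ
  refine ⟨43 / σ, by positivity, ?_⟩
  intro α' β' K' hβ' hK' J r'
  have hβpos : 0 < β' := lt_of_lt_of_le (by linarith) hβ'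
  have hβne : β' ≠ 0 := ne_of_gt hβpos
  have hKpos : 0 < K' := lt_of_lt_of_le (by positivity) hK'
  set x : ℝ := β' * K' with hxdef
  have hx : 86 ≤ x := by
    calc (86 : ℝ) = 2 * σ * (43 / σ) := by field_simp; ring
    _ ≤ β' * K' := by
        apply mul_le_mul hβ' hK' (by positivity) (le_of_lt hβpos)
  set z : ℂ := β' + α' * Complex.I with hz
  set E : ℝ := Real.exp x with hE
  set Er : ℝ := Real.exp (β' * r') with hEr
  set W : ℂ := Complex.exp (z * K') with hW
  set P : ℂ := Complex.exp (z * r') with hP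
  have hzne : z ≠ 0 := by
    intro h
    have : (z.re) = 0 := by rw [h]; simp
    simp [hz] at this
    exact hβne this
  -- rewrite each J via Jval
  simp only [J, Jval α' β' hβne]
  -- real exponential identities
  have rex : ∀ s : ℝ, Real.exp (β' * (s + K')) = Real.exp (β' * s) * E := by
    intro s
    rw [hE, hxdef, show β' * (s + K') = β' * s + β' * K' from by ring, Real.exp_add]
  have r1 : Real.exp (β' * (r' + K')) = Er * E := by rw [rex r', hEr]
  have r2 : Real.exp (β' * (r' + K' + K')) = Er * E * E := by rw [rex (r' + K'), r1]
  have r3 : Real.exp (β' * (r' + 2 * K')) = Er * E * E := by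
    rw [show r' + 2 * K' = r' + K' + K' from by ring, r2]
  have r4 : Real.exp (β' * (r' + 2 * K' + K')) = Er * E * E * E := by
    rw [rex (r' + 2 * K'), r3]
  -- complex exponential identities
  have cex : ∀ s : ℝ, Complex.exp (z * ((s + K' : ℝ) : ℂ)) = Complex.exp (z * s) * W := by
    intro s
    rw [hW, show z * ((s + K' : ℝ) : ℂ) = z * s + z * K' from by push_cast; ring,
      Complex.exp_add]
  have c1 : Complex.exp (z * ((r' + K' : ℝ) : ℂ)) = P * W := by rw [cex r', hP]
  have c2 : Complex.exp (z * ((r' + K' + K' : ℝ) : ℂ)) = P * W * W := by rw [cex (r' + K'), c1]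
  have c3 : Complex.exp (z * ((r' + 2 * K' : ℝ) : ℂ)) = P * W * W := by
    rw [show ((r' + 2 * K' : ℝ) : ℂ) = ((r' + K' + K' : ℝ) : ℂ) from by norm_num; ring, c2]
  have c4 : Complex.exp (z * ((r' + 2 * K' + K' : ℝ) : ℂ)) = P * W * W * W := by
    rw [cex (r' + 2 * K'), c3]
  rw [r1, r2, r3, r4, c1, c2, c3, c4]
  -- combine the complex real parts
  have recomb : ∀ x1 x2 x3 : ℂ, x1.re - 2 * x2.re + x3.re = (x1 - 2 * x2 + x3).re := by
    intro x1 x2 x3; simp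
  have hre : ((P * W * W * W - P * W * W) / z).re - 2 * (((P * W * W - P * W) / z).re)
      + ((P * W - P) / z).re = (P * (W - 1) ^ 3 / z).re := by
    rw [show ((P * W * W * W - P * W * W) / z).re - 2 * (((P * W * W - P * W) / z).re)
        + ((P * W - P) / z).re
        = ((P * W * W * W - P * W * W) / z - 2 * ((P * W * W - P * W) / z)
            + (P * W - P) / z).re from by simp]
    congr 1
    field_simp
    ring
  have goalform : (Er * E * E * E - Er * E * E) / β' - 2 * ((Er * E * E - Er * E) / β')
      + (Er * E - Er) / β' = Er * (E - 1) ^ 3 / β' := by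
    field_simp; ring
  have hEpos : 0 < E := Real.exp_pos _
  have hErpos : 0 < Er := Real.exp_pos _
  have hRpos : 0 < Er * (E - 1) ^ 3 / β' := by
    have : (1 : ℝ) < E := by
      rw [hE]; calc (1:ℝ) < 1 + 86 := by norm_num
      _ ≤ 1 + x := by linarith
      _ ≤ Real.exp x := by linarith [Real.add_one_le_exp x]
    have hE1 : 0 < E - 1 := by linarith
    exact div_pos (mul_pos hErpos (pow_pos hE1 3)) hβpos
  have Tform : (Er * E * E * E - Er * E * E) / β'
        + ((P * W * W * W - P * W * W) / z).re
        - 2 * ((Er * E * E - Er * E) / β' + ((P * W * W - P * W) / z).re)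
        + ((Er * E - Er) / β' + ((P * W - P) / z).re)
      = Er * (E - 1) ^ 3 / β' + (P * (W - 1) ^ 3 / z).re := by
    rw [← hre, ← goalform]; ring
  rw [Tform]
  clear_value x z E Er W P
  clear hre goalform Tform recomb rex cex c1 c2 c3 c4 r1 r2 r3 r4 J
  -- now bound the complex term
  rcases eq_or_ne α' 0 with h0 | h0
  · -- α' = 0 : complex term equals the real term
    have hz0 : z = (β' : ℂ) := by rw [hz, h0]; simp
    have hPr : P = (Er : ℂ) := by
      rw [hP, hz0, show ((β' : ℂ) * r') = ((β' * r' : ℝ) : ℂ) from by push_cast; ring,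
        ← Complex.ofReal_exp, hEr]
    have hWr : W = (E : ℂ) := by
      rw [hW, hz0, show ((β' : ℂ) * K') = ((β' * K' : ℝ) : ℂ) from by push_cast; ring,
        ← Complex.ofReal_exp, hE, hxdef]
    have : (P * (W - 1) ^ 3 / z).re = Er * (E - 1) ^ 3 / β' := by
      rw [hPr, hWr, hz0, show ((Er : ℂ) * ((E : ℂ) - 1) ^ 3 / (β' : ℂ))
        = ((Er * (E - 1) ^ 3 / β' : ℝ) : ℂ) from by push_cast; ring, Complex.ofReal_re]
    rw [this]; linarith
  · -- α' ≠ 0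
    have hzabs : 0 < ‖z‖ := norm_pos_iff.mpr hzne
    have hzsq : (‖z‖) ^ 2 = β' ^ 2 + α' ^ 2 := by
      rw [Complex.sq_norm, Complex.normSq_apply, hz]
      simp
      ring
    -- |W - 1|^2
    have hWsplit : W = (Real.exp (β' * K') : ℂ) * Complex.exp ((α' * K' : ℝ) * Complex.I) := by
      rw [hW, show z * (K' : ℂ) = ((β' * K' : ℝ) : ℂ) + ((α' * K' : ℝ) : ℂ) * Complex.I from by
        rw [hz]; push_cast; ring, Complex.exp_add, Complex.ofReal_exp]
    have hWre : W.re = E * Real.cos (α' * K') := by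
      rw [hWsplit, Complex.re_ofReal_mul, Complex.exp_ofReal_mul_I_re, hE, hxdef]
    have hWim : W.im = E * Real.sin (α' * K') := by
      rw [hWsplit, Complex.im_ofReal_mul, Complex.exp_ofReal_mul_I_im, hE, hxdef]
    have hsq : (‖W - 1‖) ^ 2
        = (E - 1) ^ 2 + 2 * E * (1 - Real.cos (α' * K')) := by
      rw [Complex.sq_norm, Complex.normSq_apply, Complex.sub_re, Complex.sub_im, hWre, hWim]
      simp only [Complex.one_re, Complex.one_im]
      linear_combination (E ^ 2) * Real.sin_sq_add_cos_sq (α' * K')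
    have hEbig : 28 * x ^ 2 < E := by rw [hE]; exact aux_exp_lb hx
    have hE6 : 6 ≤ E := by
      rw [hE]
      nlinarith [aux_exp_lb hx, hx, sq_nonneg x]
    set q : ℝ := 2 * E * (1 - Real.cos (α' * K')) with hq
    clear_value q
    have hcos1 := Real.cos_le_one (α' * K')
    have hcosn := Real.neg_one_le_cos (α' * K')
    have hEpos' : (0 : ℝ) < E := by linarith
    have hq0 : 0 ≤ q := by rw [hq]; nlinarith
    have hq4 : q ≤ 4 * E := by rw [hq]; nlinarith
    have hqc : q ≤ E * (α' * K') ^ 2 := by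
      rw [hq]
      nlinarith [aux_one_sub_cos_le (α' * K'), hEpos']
    -- main strict inequality on squares
    have hmain : ((E - 1) ^ 2 + q) ^ 3 * β' ^ 2 < ((E - 1) ^ 2) ^ 3 * (β' ^ 2 + α' ^ 2) := by
      refine aux_cube_lt hβpos h0 ?_ hE6 hq0 hqc hq4
      rw [← hxdef]; exact hEbig
    -- deduce the cube inequality
    have hkey : (‖W - 1‖) ^ 3 * β' < (E - 1) ^ 3 * ‖z‖ := by
      have hA0 : 0 ≤ ‖W - 1‖ := norm_nonneg _
      have hE1 : 0 ≤ E - 1 := by linarith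
      have hrhs : 0 ≤ (E - 1) ^ 3 * ‖z‖ := by positivity
      apply lt_of_pow_lt_pow_left₀ 2 hrhs
      have lhs2 : ((‖W - 1‖) ^ 3 * β') ^ 2
          = ((‖W - 1‖) ^ 2) ^ 3 * β' ^ 2 := by ring
      have rhs2 : ((E - 1) ^ 3 * ‖z‖) ^ 2
          = ((E - 1) ^ 2) ^ 3 * (‖z‖ ^ 2) := by ring
      rw [lhs2, rhs2, hsq, hzsq]
      exact hmain
    -- conclude
    have habsP : ‖P‖ = Er := by
      rw [hP, Complex.norm_exp, hEr]
      congr 1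
      rw [hz]
      simp
    have habs : ‖P * (W - 1) ^ 3 / z‖
        = Er * (‖W - 1‖) ^ 3 / ‖z‖ := by
      rw [norm_div, norm_mul, norm_pow, habsP]
    have hbound : Er * (‖W - 1‖) ^ 3 / ‖z‖ < Er * (E - 1) ^ 3 / β' := by
      rw [div_lt_div_iff₀ hzabs hβpos]
      have hA0 : 0 ≤ ‖W - 1‖ := norm_nonneg _
      calc Er * ‖W - 1‖ ^ 3 * β' = Er * (‖W - 1‖ ^ 3 * β') := by ring
        _ < Er * ((E - 1) ^ 3 * ‖z‖) := by
            exact mul_lt_mul_of_pos_left hkey hErpos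
        _ = Er * (E - 1) ^ 3 * ‖z‖ := by ring
    have hrele : -(Er * (‖W - 1‖) ^ 3 / ‖z‖)
        ≤ (P * (W - 1) ^ 3 / z).re := by
      rw [← habs]
      exact (abs_le.1 (Complex.abs_re_le_norm _)).1
    linarith
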